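/- Let n be a positive integer and w : {1,...,n} → ℤ with w_k ≥ 1 for all k. Let W = Σ_{k=1}^n w_k and w_max = max_k w_k, and assume n·w_max > W. Let β = √(W / (n·w_max − W)), C = √((W/2)² + β²·(n·w_max/2 − W/2)²), and for each k let d_k be the complex number with Re d_k = w_k and Im d_k = β·(w_max − w_k). If S ⊆ {1,...,n} satisfies 2·|S| ≥ n and |Σ_{k∈S} d_k| ≤ C, then 2·|S| = n and 2·Σ_{k∈S} w_k = W. -/

import Mathlib

/-- Key real-arithmetic lemma for the backward direction. -/
lemma ckp_key (nr Wr wr a m : ℝ) (hn : 0 < nr) (hW : 0 < Wr) (hw : 0 < wr)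
    (hΔ : 0 < nr * wr - Wr) (hm : nr ≤ 2 * m)
    (hk : a ^ 2 + Wr / (nr * wr - Wr) * (m * wr - a) ^ 2 ≤ Wr * nr * wr / 4) :
    2 * m = nr ∧ 2 * a = Wr := by
  have hne : nr * wr - Wr ≠ 0 := hΔ.ne'
  have h1 : (nr * wr - Wr) * a ^ 2 + Wr * (m * wr - a) ^ 2
      ≤ Wr * nr * wr * (nr * wr - Wr) / 4 := by
    have h := mul_le_mul_of_nonneg_right hk hΔ.le
    have e : Wr / (nr * wr - Wr) * (m * wr - a) ^ 2 * (nr * wr - Wr)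
        = Wr * (m * wr - a) ^ 2 := by field_simp
    nlinarith [h, e]
  have hn1 := mul_le_mul_of_nonneg_left h1 hn.le
  have hq : 4 * m ^ 2 * (wr * Wr * (nr * wr - Wr))
      ≤ nr ^ 2 * (wr * Wr * (nr * wr - Wr)) := by
    nlinarith [hn1, mul_nonneg hw.le (sq_nonneg (nr * a - Wr * m))]
  have hP : 0 < wr * Wr * (nr * wr - Wr) := by positivity
  have hm2 : 4 * m ^ 2 ≤ nr ^ 2 := (mul_le_mul_iff_of_pos_right hP).mp hq
  have hle : 2 * m ≤ nr := by nlinarith [hm, hn]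
  have h2m : 2 * m = nr := le_antisymm hle hm
  refine ⟨h2m, ?_⟩
  rw [← h2m] at hn1 hn
  have hmpos : 0 < m := by linarith
  have h0 : wr * m ^ 2 * (2 * a - Wr) ^ 2 ≤ 0 := by nlinarith [hn1]
  have h00 : (2 * a - Wr) ^ 2 ≤ 0 := by
    nlinarith [h0, mul_pos hw (pow_pos hmpos 2)]
  have hx : 2 * a - Wr = 0 :=
    pow_eq_zero_iff two_ne_zero |>.mp (le_antisymm h00 (sq_nonneg _))
  linarith

/-- Backward direction of the reduction from EQUIPARTITION to the decision
version of C-KP: any feasible solution of the reduced C-KP instance with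
cardinality at least `n/2` must have cardinality exactly `n/2` and weight sum
exactly `W/2`. -/
theorem ckp_reduction_backward (n : ℕ) (hn : 0 < n)
    (w : Fin n → ℤ) (hw : ∀ k, 1 ≤ w k)
    (W : ℤ) (hW : W = ∑ k, w k)
    (wmax : ℤ) (hwmax_ub : ∀ k, w k ≤ wmax) (hwmax_mem : ∃ k, w k = wmax)
    (hlt : W < (n : ℤ) * wmax)
    (β : ℝ) (hβ : β = Real.sqrt ((W : ℝ) / ((n : ℝ) * (wmax : ℝ) - (W : ℝ))))
    (C : ℝ) (hC : C = Real.sqrt (((W : ℝ) / 2) ^ 2 +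
      β ^ 2 * ((n : ℝ) * (wmax : ℝ) / 2 - (W : ℝ) / 2) ^ 2))
    (d : Fin n → ℂ)
    (hd_re : ∀ k, (d k).re = (w k : ℝ))
    (hd_im : ∀ k, (d k).im = β * ((wmax : ℝ) - (w k : ℝ)))
    (S : Finset (Fin n)) (hcard : n ≤ 2 * S.card)
    (hfeas : ‖∑ k ∈ S, d k‖ ≤ C) :
    2 * S.card = n ∧ 2 * ∑ k ∈ S, w k = W := by
  have hWpos : 0 < W := by
    rw [hW]
    refine Finset.sum_pos (fun k _ => lt_of_lt_of_le one_pos (hw k)) ?_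
    exact Finset.univ_nonempty_iff.2 (Fin.pos_iff_nonempty.mp hn)
  have hWrpos : (0 : ℝ) < (W : ℝ) := by exact_mod_cast hWpos
  have hnrpos : (0 : ℝ) < (n : ℝ) := by exact_mod_cast hn
  have hwmaxpos : 0 < wmax := by
    obtain ⟨k, hk⟩ := hwmax_mem
    exact lt_of_lt_of_le one_pos (hk ▸ hw k)
  have hwrpos : (0 : ℝ) < (wmax : ℝ) := by exact_mod_cast hwmaxpos
  have hΔ : (0 : ℝ) < (n : ℝ) * (wmax : ℝ) - (W : ℝ) := by
    have : (W : ℝ) < (n : ℝ) * (wmax : ℝ) := by exact_mod_cast hlt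
    linarith
  have hβ2 : β ^ 2 = (W : ℝ) / ((n : ℝ) * (wmax : ℝ) - (W : ℝ)) := by
    rw [hβ]
    exact Real.sq_sqrt (div_nonneg hWrpos.le hΔ.le)
  have hre : (∑ k ∈ S, d k).re = ((∑ k ∈ S, w k : ℤ) : ℝ) := by
    rw [Complex.re_sum]
    simp only [hd_re]
    push_cast; ring
  have him : (∑ k ∈ S, d k).im
      = β * ((S.card : ℝ) * (wmax : ℝ) - ((∑ k ∈ S, w k : ℤ) : ℝ)) := by
    rw [Complex.im_sum]
    simp only [hd_im]
    rw [← Finset.mul_sum, Finset.sum_sub_distrib, Finset.sum_const,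
      nsmul_eq_mul]
    push_cast; ring
  have hC0 : 0 ≤ C := hC ▸ Real.sqrt_nonneg _
  have hsq : ((∑ k ∈ S, w k : ℤ) : ℝ) ^ 2
      + (β * ((S.card : ℝ) * (wmax : ℝ) - ((∑ k ∈ S, w k : ℤ) : ℝ))) ^ 2
      ≤ C ^ 2 := by
    have h1 : (‖∑ k ∈ S, d k‖) ^ 2 ≤ C ^ 2 :=
      pow_le_pow_left₀ (norm_nonneg _) hfeas 2
    rwa [Complex.sq_norm, Complex.normSq_apply, hre, him, ← pow_two, ← pow_two]
      at h1
  have hC2 : C ^ 2 = (W : ℝ) * (n : ℝ) * (wmax : ℝ) / 4 := by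
    rw [hC, Real.sq_sqrt (by positivity), hβ2]
    field_simp
    ring
  have hkey : ((∑ k ∈ S, w k : ℤ) : ℝ) ^ 2
      + (W : ℝ) / ((n : ℝ) * (wmax : ℝ) - (W : ℝ))
        * ((S.card : ℝ) * (wmax : ℝ) - ((∑ k ∈ S, w k : ℤ) : ℝ)) ^ 2
      ≤ (W : ℝ) * (n : ℝ) * (wmax : ℝ) / 4 := by
    calc _ = ((∑ k ∈ S, w k : ℤ) : ℝ) ^ 2
        + (β * ((S.card : ℝ) * (wmax : ℝ) - ((∑ k ∈ S, w k : ℤ) : ℝ))) ^ 2 := by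
          rw [mul_pow, hβ2]
      _ ≤ C ^ 2 := hsq
      _ = _ := hC2
  have hmr : ((n : ℝ)) ≤ 2 * (S.card : ℝ) := by exact_mod_cast hcard
  obtain ⟨h1, h2⟩ := ckp_key (n : ℝ) (W : ℝ) (wmax : ℝ)
    ((∑ k ∈ S, w k : ℤ) : ℝ) (S.card : ℝ) hnrpos hWrpos hwrpos hΔ hmr hkey
  constructor
  · exact_mod_cast h1
  · exact_mod_cast h2
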